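/- Let C* be a finite set of points in a metric space (X, d) and let ℓ be a positive integer with |C*| ≥ ℓ. Then there exists a finite set 𝕋 of neighborhood trees with respect to C* such that: (T1) every tree (V, E, r) ∈ 𝕋 satisfies ℓ ≤ |V| ≤ ℓ²; (T2) the union of the vertex sets of the trees in 𝕋 equals C*; and (T3) for any two distinct trees (V, E, r), (V', E', r') ∈ 𝕋, the sets V ∖ {r} and V' ∖ {r'} are disjoint. -/

import Mathlib

open scoped Classical
set_option linter.unusedSectionVars false
set_option linter.unusedVariables false
set_option maxHeartbeats 1000000


namespace CKM

/-- A rooted tree on a finite vertex set `V` of points of `X`, encoded by its parent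
function: every vertex reaches the root by iterating `parent`, and the root is a fixed
point of `parent`. The edges of the tree are the pairs `(v, parent v)` for `v ∈ V`,
`v ≠ root`. -/
structure RootedTree (X : Type) where
  V : Finset X
  root : X
  root_mem : root ∈ V
  parent : X → X
  parent_mem : ∀ v ∈ V, parent v ∈ V
  parent_root : parent root = root
  reaches_root : ∀ v ∈ V, ∃ n : ℕ, parent^[n] v = root

/-- `Λ_T(v)`: the set of vertices in the subtree of `T` rooted at `v`. -/
def RootedTree.subtree {X : Type} (T : RootedTree X) (v : X) : Set X :=
  { w | w ∈ T.V ∧ ∃ n : ℕ, T.parent^[n] w = v }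

/-- A rooted tree `T` with vertices among `Cs` is a *neighborhood tree* with respect to
`Cs` if for every non-root vertex `v`, `d(v, Cs ∖ Λ_T(v)) = d(v, ρ_T(v))`, i.e. the
parent of `v` is a nearest point to `v` among all points of `Cs` outside the subtree
of `v`. -/
def IsNeighborhoodTree {X : Type} [PseudoMetricSpace X] (Cs : Finset X)
    (T : RootedTree X) : Prop :=
  (∀ v ∈ T.V, v ∈ Cs) ∧
  ∀ v ∈ T.V, v ≠ T.root →
    ∀ w ∈ Cs, w ∉ T.subtree v → dist v (T.parent v) ≤ dist v w

end CKM

namespace NT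
variable {X : Type} [PseudoMetricSpace X]

def Rch (p : X → X) (v u : X) : Prop := ∃ n : ℕ, p^[n] v = u

lemma Rch.refl (p : X → X) (v : X) : Rch p v v := ⟨0, rfl⟩

lemma Rch.trans {p : X → X} {a b c : X} (h1 : Rch p a b) (h2 : Rch p b c) :
    Rch p a c := by
  obtain ⟨n, hn⟩ := h1; obtain ⟨m, hm⟩ := h2
  exact ⟨m + n, by rw [Function.iterate_add_apply, hn, hm]⟩

lemma Rch.step (p : X → X) (v : X) : Rch p v (p v) := ⟨1, rfl⟩

lemma rch_of_parent_rch {p : X → X} {v u : X} (h : Rch p (p v) u) : Rch p v u := by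
  obtain ⟨n, hn⟩ := h
  exact ⟨n + 1, by rw [Function.iterate_succ_apply]; exact hn⟩

lemma parent_rch_of_rch_ne {p : X → X} {v u : X} (h : Rch p v u) (hne : v ≠ u) :
    Rch p (p v) u := by
  obtain ⟨n, hn⟩ := h
  cases n with
  | zero => exact absurd hn hne
  | succ k => exact ⟨k, by rw [Function.iterate_succ_apply] at hn; exact hn⟩

lemma exists_subsum {α : Type*} [DecidableEq α] (k m : ℕ) (hk : 1 ≤ k) :
    ∀ (s : Finset α) (f : α → ℕ), (∀ a ∈ s, f a ≤ m) → k ≤ ∑ a ∈ s, f a →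
    ∃ t ⊆ s, k ≤ ∑ a ∈ t, f a ∧ ∑ a ∈ t, f a ≤ k + m - 1 := by
  intro s
  induction s using Finset.strongInduction with
  | _ s ih =>
    intro f hub hlb
    by_cases hbig : ∑ a ∈ s, f a ≤ k + m - 1
    · exact ⟨s, Finset.Subset.refl s, hlb, hbig⟩
    · push_neg at hbig
      have hne : s.Nonempty := by
        rcases Finset.eq_empty_or_nonempty s with h | h
        · subst h; simp at hlb; omega
        · exact h
      obtain ⟨a, ha⟩ := hne
      have hsub : s.erase a ⊂ s := Finset.erase_ssubset ha
      have hsum : ∑ x ∈ s.erase a, f x = (∑ x ∈ s, f x) - f a := by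
        rw [← Finset.add_sum_erase s f ha]; omega
      have hfa : f a ≤ m := hub a ha
      obtain ⟨t, ht, h1, h2⟩ := ih (s.erase a) hsub f
        (fun x hx => hub x (Finset.mem_of_mem_erase hx)) (by omega)
      exact ⟨t, ht.trans (Finset.erase_subset _ _), h1, h2⟩

def SProps (ℓ : ℕ) (p : X → X) (S : X → Finset X) (Amb : Finset X) (v : X) : Prop :=
  v ∈ S v ∧ S v ⊆ Amb ∧ (S v).card ≤ ℓ ∧
  (∀ y ∈ S v, ∃ n, p^[n] y = v ∧ ∀ m < n, p^[m] y ∈ S v) ∧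
  (∀ y ∈ S v, y ≠ v → p y ∈ S v) ∧
  (∀ c ∈ S v, S c ⊆ S v)

/-- Global invariant of phase 1. -/
structure G1 (Cs : Finset X) (ℓ : ℕ) (P : Finset X) (p : X → X) (S : X → Finset X)
    (R : Finset X) : Prop where
  hPC : P ⊆ Cs
  hRP : R ⊆ P
  hroot : ∀ r ∈ R, p r = r
  hS : ∀ v ∈ P, SProps ℓ p S P v
  hScardR : ∀ r ∈ R, (S r).card = ℓ
  hpar : ∀ v ∈ P, v ∉ R → p v ∈ P
  hguar : ∀ v ∈ P, v ∉ R → ∀ u ∈ Cs, u ∉ S v → dist v (p v) ≤ dist v u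
  hreachR : ∀ v ∈ P, ∃ n, p^[n] v ∈ R ∧ ∀ m < n, p^[m] v ∈ P

/-- Invariant for the chain being grown, with tip `w`. -/
structure C1 (Cs : Finset X) (ℓ : ℕ) (P : Finset X) (p : X → X) (S : X → Finset X)
    (D : Finset X) (w : X) : Prop where
  hDC : D ⊆ Cs
  hDP : ∀ x ∈ D, x ∉ P
  hwD : w ∈ D
  hS : ∀ x ∈ D, x ≠ w → SProps ℓ p S D x
  hwS : ∀ x ∈ D, x ≠ w → w ∉ S x
  hpD : ∀ x ∈ D, x ≠ w → p x ∈ D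
  hguar : ∀ x ∈ D, x ≠ w → ∀ u ∈ Cs, u ∉ S x → dist x (p x) ≤ dist x u
  hreachw : ∀ x ∈ D, ∃ n, p^[n] x = w ∧ ∀ m < n, p^[m] x ∈ D ∧ p^[m] x ≠ w


lemma SProps.mono {ℓ : ℕ} {p : X → X} {S : X → Finset X} {A A' : Finset X} {v : X}
    (h : SProps ℓ p S A v) (hA : A ⊆ A') : SProps ℓ p S A' v :=
  ⟨h.1, h.2.1.trans hA, h.2.2⟩

lemma iter_congr {p p' : X → X} {x : X} :
    ∀ (n : ℕ), (∀ m < n, p' (p^[m] x) = p (p^[m] x)) → p'^[n] x = p^[n] x := by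
  intro n
  induction n with
  | zero => intro _; rfl
  | succ k ih =>
    intro h
    rw [Function.iterate_succ_apply', Function.iterate_succ_apply',
      ih (fun m hm => h m (by omega)), h k (by omega)]

lemma SProps.update {ℓ : ℕ} {p : X → X} {S : X → Finset X} {A : Finset X} {v w t : X}
    {D : Finset X} (h : SProps ℓ p S A v) (hw : w ∉ S v) :
    SProps ℓ (Function.update p w t) (Function.update S w D) A v := by
  obtain ⟨h1, h2, h3, h4, h5, h6⟩ := h
  have hvw : v ≠ w := fun hv => hw (hv ▸ h1)
  have hSv : Function.update S w D v = S v := Function.update_of_ne hvw _ _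
  refine ⟨by rw [hSv]; exact h1, by rw [hSv]; exact h2, by rw [hSv]; exact h3, ?_, ?_, ?_⟩
  · rw [hSv]
    intro y hy
    obtain ⟨n, hn, hm⟩ := h4 y hy
    refine ⟨n, ?_, ?_⟩
    · rw [iter_congr n (fun m hmn =>
        Function.update_of_ne (fun he => hw (by rw [← he]; exact hm m hmn)) _ _)]
      exact hn
    · intro m hmn
      rw [iter_congr m (fun j hj =>
        Function.update_of_ne (fun he => hw (by rw [← he]; exact hm j (by omega))) _ _)]
      exact hm m hmn
  · rw [hSv]
    intro y hy hyv
    rw [Function.update_of_ne (fun he => hw (by rw [← he]; exact hy)) _ _]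
    exact h5 y hy hyv
  · rw [hSv]
    intro c hc
    rw [Function.update_of_ne (fun he => hw (by rw [← he]; exact hc)) _ _]
    exact h6 c hc

section Finish

variable {Cs : Finset X} {ℓ : ℕ} {P : Finset X} {p : X → X} {S : X → Finset X}
  {R D : Finset X} {w : X}

/-- Closing off the current chain: either rooting it (tgt = w, |D| = ℓ) or attaching
it to a processed point `tgt ∈ P`. -/
lemma finish_chain (hG : G1 Cs ℓ P p S R) (hC : C1 Cs ℓ P p S D w)
    (hDcard : D.card ≤ ℓ) (tgt : X) (R' : Finset X)
    (hcase : (tgt = w ∧ D.card = ℓ ∧ R' = insert w R) ∨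
      (tgt ∈ P ∧ (∀ u ∈ Cs, u ∉ D → dist w tgt ≤ dist w u) ∧ R' = R)) :
    G1 Cs ℓ (P ∪ D) (Function.update p w tgt) (Function.update S w D) R' := by
  set p' := Function.update p w tgt with hp'
  set S' := Function.update S w D with hS'
  have hwP : w ∉ P := hC.hDP w hC.hwD
  have hSw : S' w = D := Function.update_self _ _ _
  have hpw : p' w = tgt := Function.update_self _ _ _
  have hpold : ∀ v : X, v ≠ w → p' v = p v := fun v hv => Function.update_of_ne hv _ _
  have hSold : ∀ v : X, v ≠ w → S' v = S v := fun v hv => Function.update_of_ne hv _ _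
  have hnew_old : ∀ v ∈ P, v ≠ w := fun v hv hvw => hwP (hvw ▸ hv)
  -- SProps for old points
  have SP_old : ∀ v ∈ P, SProps ℓ p' S' (P ∪ D) v := by
    intro v hv
    have hw : w ∉ S v := fun hmem => hwP ((hG.hS v hv).2.1 hmem)
    exact ((hG.hS v hv).update hw).mono Finset.subset_union_left
  -- SProps for chain points other than w
  have SP_D : ∀ x ∈ D, x ≠ w → SProps ℓ p' S' (P ∪ D) x := by
    intro x hx hxw
    exact (((hC.hS x hx hxw)).update (hC.hwS x hx hxw)).mono Finset.subset_union_right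
  -- iterates of chain points to w are preserved
  have reach_w : ∀ x ∈ D, ∃ n, p'^[n] x = w ∧ ∀ m < n, p'^[m] x ∈ D ∧ p'^[m] x ≠ w := by
    intro x hx
    obtain ⟨n, hn, hm⟩ := hC.hreachw x hx
    have he : ∀ m < n, p'^[m] x = p^[m] x := by
      intro m hmn
      exact iter_congr m (fun j hj => hpold _ (hm j (by omega)).2)
    refine ⟨n, ?_, fun m hmn => by rw [he m hmn]; exact hm m hmn⟩
    rw [iter_congr n (fun j hj => hpold _ (hm j hj).2)]
    exact hn
  -- SProps for w
  have SP_w : SProps ℓ p' S' (P ∪ D) w := by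
    refine ⟨by rw [hSw]; exact hC.hwD, by rw [hSw]; exact Finset.subset_union_right,
      by rw [hSw]; exact hDcard, ?_, ?_, ?_⟩
    · rw [hSw]
      intro y hy
      obtain ⟨n, hn, hm⟩ := reach_w y hy
      exact ⟨n, hn, fun m hmn => (hm m hmn).1⟩
    · rw [hSw]
      intro y hy hyw
      rw [hpold y hyw]
      exact hC.hpD y hy hyw
    · rw [hSw]
      intro c hc
      by_cases hcw : c = w
      · subst hcw; rw [hSw]
      · rw [hSold c hcw]
        exact (hC.hS c hc hcw).2.1
  -- old iterates preserved
  have iter_old : ∀ v ∈ P, ∀ n, (∀ m < n, p^[m] v ∈ P) → p'^[n] v = p^[n] v := by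
    intro v hv n hall
    exact iter_congr n (fun m hm => hpold _ (hnew_old _ (hall m hm)))
  have hRR : R ⊆ R' := by
    rcases hcase with ⟨_, _, h⟩ | ⟨_, _, h⟩
    · rw [h]; exact Finset.subset_insert _ _
    · rw [h]
  have hR'sub : R' ⊆ P ∪ D := by
    rcases hcase with ⟨_, _, h⟩ | ⟨_, _, h⟩
    · rw [h]
      exact Finset.insert_subset (Finset.mem_union_right _ hC.hwD)
        (hG.hRP.trans Finset.subset_union_left)
    · rw [h]; exact hG.hRP.trans Finset.subset_union_left
  constructor
  · exact Finset.union_subset hG.hPC hC.hDC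
  · exact hR'sub
  · -- hroot
    intro r hr
    rcases hcase with ⟨htw, _, h3⟩ | ⟨htP, _, h3⟩
    · rw [h3] at hr
      rcases Finset.mem_insert.mp hr with h | h
      · rw [h, hpw, htw]
      · have hrw : r ≠ w := fun he => hwP (hG.hRP (show w ∈ R by rw [← he]; exact h))
        rw [hpold r hrw]; exact hG.hroot r h
    · rw [h3] at hr
      have hrw : r ≠ w := fun he => hwP (hG.hRP (show w ∈ R by rw [← he]; exact hr))
      rw [hpold r hrw]; exact hG.hroot r hr
  · -- hS
    intro v hv
    rcases Finset.mem_union.mp hv with hvP | hvD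
    · exact SP_old v hvP
    · by_cases hvw : v = w
      · subst hvw; exact SP_w
      · exact SP_D v hvD hvw
  · -- hScardR
    intro r hr
    rcases hcase with ⟨_, h2, h3⟩ | ⟨htP, _, h3⟩
    · rw [h3] at hr
      rcases Finset.mem_insert.mp hr with h | h
      · rw [h, hSw]; exact h2
      · have hrw : r ≠ w := fun he => hwP (hG.hRP (show w ∈ R by rw [← he]; exact h))
        rw [hSold r hrw]; exact hG.hScardR r h
    · rw [h3] at hr
      have hrw : r ≠ w := fun he => hwP (hG.hRP (show w ∈ R by rw [← he]; exact hr))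
      rw [hSold r hrw]; exact hG.hScardR r hr
  · -- hpar
    intro v hv hvR
    rcases Finset.mem_union.mp hv with hvP | hvD
    · have hvw := hnew_old v hvP
      rw [hpold v hvw]
      exact Finset.mem_union_left _ (hG.hpar v hvP (fun h => hvR (hRR h)))
    · by_cases hvw : v = w
      · rw [hvw] at hvR ⊢
        rw [hpw]
        rcases hcase with ⟨_, _, h3⟩ | ⟨htP, _, _⟩
        · exact absurd (show w ∈ R' by rw [h3]; exact Finset.mem_insert_self w R) hvR
        · exact Finset.mem_union_left _ htP
      · rw [hpold v hvw]
        exact Finset.mem_union_right _ (hC.hpD v hvD hvw)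
  · -- hguar
    intro v hv hvR u hu huS
    rcases Finset.mem_union.mp hv with hvP | hvD
    · have hvw := hnew_old v hvP
      rw [hpold v hvw]
      rw [hSold v hvw] at huS
      exact hG.hguar v hvP (fun h => hvR (hRR h)) u hu huS
    · by_cases hvw : v = w
      · rw [hvw] at hvR huS ⊢
        rw [hpw]
        rw [hSw] at huS
        rcases hcase with ⟨_, _, h3⟩ | ⟨_, h2, _⟩
        · exact absurd (show w ∈ R' by rw [h3]; exact Finset.mem_insert_self w R) hvR
        · exact h2 u hu huS
      · rw [hpold v hvw]
        rw [hSold v hvw] at huS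
        exact hC.hguar v hvD hvw u hu huS
  · -- hreachR
    intro v hv
    rcases Finset.mem_union.mp hv with hvP | hvD
    · obtain ⟨n, hn, hm⟩ := hG.hreachR v hvP
      refine ⟨n, ?_, ?_⟩
      · rw [iter_old v hvP n (fun j hj => hm j hj)]; exact hRR hn
      · intro m hmn
        have : p'^[m] v = p^[m] v := iter_old v hvP m (fun j hj => hm j (by omega))
        rw [this]
        exact Finset.mem_union_left _ (hm m hmn)
    · obtain ⟨n, hn, hm⟩ := reach_w v hvD
      rcases hcase with ⟨htw, _, h3⟩ | ⟨htP, _, h3⟩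
      · refine ⟨n, ?_, ?_⟩
        · rw [hn, h3]; exact Finset.mem_insert_self w R
        · intro m hmn
          exact Finset.mem_union_right _ (hm m hmn).1
      · -- attach: continue from tgt
        obtain ⟨k, hk, hkm⟩ := hG.hreachR tgt htP
        have htgt_iter : ∀ j ≤ k, p'^[j] tgt = p^[j] tgt := by
          intro j hj
          exact iter_congr j (fun i hi => hpold _ (hnew_old _ (hkm i (by omega))))
        have hstep : p'^[n+1] v = tgt := by
          rw [Function.iterate_succ_apply', hn, hpw]
        refine ⟨k + (n+1), ?_, ?_⟩
        · rw [Function.iterate_add_apply, hstep, htgt_iter k (le_refl k), h3]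
          exact hk
        · intro m hmn
          by_cases hm1 : m < n
          · exact Finset.mem_union_right _ (hm m hm1).1
          · by_cases hm2 : m = n
            · subst hm2; rw [hn]; exact Finset.mem_union_right _ hC.hwD
            · have : m = (m - (n+1)) + (n+1) := by omega
              rw [this, Function.iterate_add_apply, hstep,
                htgt_iter (m - (n+1)) (by omega)]
              exact Finset.mem_union_left _ (hkm (m - (n+1)) (by omega))


end Finish

/-- `G1` is stable under updating at an unprocessed point. -/
lemma G1.update {Cs : Finset X} {ℓ : ℕ} {P : Finset X} {p : X → X} {S : X → Finset X}
    {R : Finset X} {w : X} (hG : G1 Cs ℓ P p S R) (hw : w ∉ P) (t : X) (D : Finset X) :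
    G1 Cs ℓ P (Function.update p w t) (Function.update S w D) R := by
  have hpold : ∀ v : X, v ≠ w → Function.update p w t v = p v :=
    fun v hv => Function.update_of_ne hv _ _
  have hSold : ∀ v : X, v ≠ w → Function.update S w D v = S v :=
    fun v hv => Function.update_of_ne hv _ _
  have hPw : ∀ v ∈ P, v ≠ w := fun v hv hvw => hw (hvw ▸ hv)
  constructor
  · exact hG.hPC
  · exact hG.hRP
  · intro r hr
    rw [hpold r (hPw r (hG.hRP hr))]
    exact hG.hroot r hr
  · intro v hv
    exact (hG.hS v hv).update (fun hmem => hw ((hG.hS v hv).2.1 hmem))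
  · intro r hr
    rw [hSold r (hPw r (hG.hRP hr))]
    exact hG.hScardR r hr
  · intro v hv hvR
    rw [hpold v (hPw v hv)]
    exact hG.hpar v hv hvR
  · intro v hv hvR u hu huS
    rw [hSold v (hPw v hv)] at huS
    rw [hpold v (hPw v hv)]
    exact hG.hguar v hv hvR u hu huS
  · intro v hv
    obtain ⟨n, hn, hm⟩ := hG.hreachR v hv
    have he : ∀ j ≤ n, (Function.update p w t)^[j] v = p^[j] v := by
      intro j hj
      exact iter_congr j (fun i hi => hpold _ (hPw _ (hm i (by omega))))
    exact ⟨n, by rw [he n (le_refl n)]; exact hn,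
      fun m hmn => by rw [he m (by omega)]; exact hm m hmn⟩

section Extend

variable {Cs : Finset X} {ℓ : ℕ} {P : Finset X} {p : X → X} {S : X → Finset X}
  {R D : Finset X} {w : X}

/-- Extending the chain by a new point `x`. -/
lemma extend_chain (hC : C1 Cs ℓ P p S D w)
    (hDcard : D.card ≤ ℓ) (x : X) (hxC : x ∈ Cs) (hxD : x ∉ D) (hxP : x ∉ P)
    (hguarw : ∀ u ∈ Cs, u ∉ D → dist w x ≤ dist w u) :
    C1 Cs ℓ P (Function.update p w x) (Function.update S w D) (insert x D) x := by
  set p' := Function.update p w x with hp'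
  set S' := Function.update S w D with hS'
  have hSw : S' w = D := Function.update_self _ _ _
  have hpw : p' w = x := Function.update_self _ _ _
  have hpold : ∀ v : X, v ≠ w → p' v = p v := fun v hv => Function.update_of_ne hv _ _
  have hSold : ∀ v : X, v ≠ w → S' v = S v := fun v hv => Function.update_of_ne hv _ _
  have hxw : x ≠ w := fun h => hxD (h ▸ hC.hwD)
  have reach_w : ∀ y ∈ D, ∃ n, p'^[n] y = w ∧ ∀ m < n, p'^[m] y ∈ D ∧ p'^[m] y ≠ w := by
    intro y hy
    obtain ⟨n, hn, hm⟩ := hC.hreachw y hy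
    have he : ∀ j ≤ n, p'^[j] y = p^[j] y := by
      intro j hj
      exact iter_congr j (fun i hi => hpold _ (hm i (by omega)).2)
    exact ⟨n, by rw [he n (le_refl n)]; exact hn,
      fun m hmn => by rw [he m (by omega)]; exact hm m hmn⟩
  constructor
  · exact Finset.insert_subset hxC hC.hDC
  · intro y hy
    rcases Finset.mem_insert.mp hy with h | h
    · rw [h]; exact hxP
    · exact hC.hDP y h
  · exact Finset.mem_insert_self x D
  · -- hS
    intro y hy hyx
    have hyD : y ∈ D := by
      rcases Finset.mem_insert.mp hy with h | h
      · exact absurd h hyx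
      · exact h
    by_cases hyw : y = w
    · -- SProps for w, with S' w = D
      rw [hyw]
      refine ⟨by rw [hSw]; exact hC.hwD,
        by rw [hSw]; exact Finset.subset_insert _ _,
        by rw [hSw]; exact hDcard, ?_, ?_, ?_⟩
      · rw [hSw]
        intro z hz
        obtain ⟨n, hn, hm⟩ := reach_w z hz
        exact ⟨n, hn, fun m hmn => (hm m hmn).1⟩
      · rw [hSw]
        intro z hz hzw
        rw [hpold z hzw]
        exact hC.hpD z hz hzw
      · rw [hSw]
        intro c hc
        by_cases hcw : c = w
        · rw [hcw, hSw]
        · rw [hSold c hcw]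
          exact (hC.hS c hc hcw).2.1
    · exact ((hC.hS y hyD hyw).update (hC.hwS y hyD hyw)).mono (Finset.subset_insert _ _)
  · -- hwS (new tip x not in any S' y)
    intro y hy hyx
    have hyD : y ∈ D := by
      rcases Finset.mem_insert.mp hy with h | h
      · exact absurd h hyx
      · exact h
    by_cases hyw : y = w
    · rw [hyw, hSw]; exact hxD
    · rw [hSold y hyw]
      exact fun hmem => hxD ((hC.hS y hyD hyw).2.1 hmem)
  · -- hpD
    intro y hy hyx
    have hyD : y ∈ D := by
      rcases Finset.mem_insert.mp hy with h | h
      · exact absurd h hyx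
      · exact h
    by_cases hyw : y = w
    · rw [hyw, hpw]; exact Finset.mem_insert_self x D
    · rw [hpold y hyw]
      exact Finset.mem_insert_of_mem (hC.hpD y hyD hyw)
  · -- hguar
    intro y hy hyx u hu huS
    have hyD : y ∈ D := by
      rcases Finset.mem_insert.mp hy with h | h
      · exact absurd h hyx
      · exact h
    by_cases hyw : y = w
    · rw [hyw] at huS ⊢
      rw [hSw] at huS
      rw [hpw]
      exact hguarw u hu huS
    · rw [hSold y hyw] at huS
      rw [hpold y hyw]
      exact hC.hguar y hyD hyw u hu huS
  · -- hreachw (to the new tip x)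
    intro y hy
    rcases Finset.mem_insert.mp hy with h | h
    · exact ⟨0, by simp [h], by omega⟩
    · obtain ⟨n, hn, hm⟩ := reach_w y h
      refine ⟨n + 1, ?_, ?_⟩
      · rw [Function.iterate_succ_apply', hn, hpw]
      · intro m hmn
        by_cases hm1 : m < n
        · exact ⟨Finset.mem_insert_of_mem (hm m hm1).1,
            fun he => hxD (he ▸ (hm m hm1).1)⟩
        · have hmn' : m = n := by omega
          rw [hmn', hn]
          exact ⟨Finset.mem_insert_of_mem hC.hwD, fun he => hxD (he ▸ hC.hwD)⟩

end Extend

variable {Cs : Finset X} {ℓ : ℕ}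

lemma chain_rec (hCs : ℓ ≤ Cs.card) :
    ∀ (k : ℕ) (P : Finset X) (p : X → X) (S : X → Finset X) (R D : Finset X) (w : X),
    G1 Cs ℓ P p S R → C1 Cs ℓ P p S D w → D.card ≤ ℓ → ℓ - D.card ≤ k →
    ∃ P' p' S' R', G1 Cs ℓ P' p' S' R' ∧ P ⊆ P' ∧ P.card < P'.card := by
  intro k
  induction k with
  | zero =>
    intro P p S R D w hG hC hDcard hk
    have hcard : D.card = ℓ := by omega
    refine ⟨P ∪ D, _, _, insert w R,
      finish_chain hG hC hDcard w (insert w R) (Or.inl ⟨rfl, hcard, rfl⟩),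
      Finset.subset_union_left, ?_⟩
    exact Finset.card_lt_card (Finset.ssubset_iff_of_subset Finset.subset_union_left
      |>.mpr ⟨w, Finset.mem_union_right _ hC.hwD, hC.hDP w hC.hwD⟩)
  | succ k ih =>
    intro P p S R D w hG hC hDcard hk
    by_cases hfull : D.card = ℓ
    · refine ⟨P ∪ D, _, _, insert w R,
        finish_chain hG hC hDcard w (insert w R) (Or.inl ⟨rfl, hfull, rfl⟩),
        Finset.subset_union_left, ?_⟩
      exact Finset.card_lt_card (Finset.ssubset_iff_of_subset Finset.subset_union_left
        |>.mpr ⟨w, Finset.mem_union_right _ hC.hwD, hC.hDP w hC.hwD⟩)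
    · have hlt : D.card < ℓ := lt_of_le_of_ne hDcard hfull
      have hne : (Cs \ D).Nonempty := by
        rw [← Finset.card_pos, Finset.card_sdiff_of_subset hC.hDC]
        omega
      obtain ⟨x, hx, hmin⟩ := Finset.exists_min_image (Cs \ D) (fun u => dist w u) hne
      have hxCs : x ∈ Cs := (Finset.mem_sdiff.mp hx).1
      have hxD : x ∉ D := (Finset.mem_sdiff.mp hx).2
      have hguarw : ∀ u ∈ Cs, u ∉ D → dist w x ≤ dist w u :=
        fun u hu hu2 => hmin u (Finset.mem_sdiff.mpr ⟨hu, hu2⟩)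
      by_cases hxP : x ∈ P
      · refine ⟨P ∪ D, _, _, R,
          finish_chain hG hC hDcard x R (Or.inr ⟨hxP, hguarw, rfl⟩),
          Finset.subset_union_left, ?_⟩
        exact Finset.card_lt_card (Finset.ssubset_iff_of_subset Finset.subset_union_left
          |>.mpr ⟨w, Finset.mem_union_right _ hC.hwD, hC.hDP w hC.hwD⟩)
      · have hG' := hG.update (hC.hDP w hC.hwD) x D
        have hC' := extend_chain hC hDcard x hxCs hxD hxP hguarw
        have hcard' : (insert x D).card = D.card + 1 := Finset.card_insert_of_notMem hxD
        exact ih P _ _ R (insert x D) x hG' hC' (by omega) (by omega)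

lemma phase1_rec (hℓ : 1 ≤ ℓ) (hCs : ℓ ≤ Cs.card) :
    ∀ (k : ℕ) (P : Finset X) (p : X → X) (S : X → Finset X) (R : Finset X),
    G1 Cs ℓ P p S R → Cs.card - P.card ≤ k →
    ∃ (p' : X → X) (S' : X → Finset X) (R' : Finset X), G1 Cs ℓ Cs p' S' R' := by
  intro k
  induction k with
  | zero =>
    intro P p S R hG hk
    have : P = Cs := Finset.eq_of_subset_of_card_le hG.hPC (by
      have := Finset.card_le_card hG.hPC
      omega)
    exact ⟨p, S, R, this ▸ hG⟩
  | succ k ih =>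
    intro P p S R hG hk
    by_cases hfull : Cs.card ≤ P.card
    · have : P = Cs := Finset.eq_of_subset_of_card_le hG.hPC hfull
      exact ⟨p, S, R, this ▸ hG⟩
    · have hne : (Cs \ P).Nonempty := by
        rw [← Finset.card_pos, Finset.card_sdiff_of_subset hG.hPC]
        omega
      obtain ⟨w, hw⟩ := hne
      have hwCs : w ∈ Cs := (Finset.mem_sdiff.mp hw).1
      have hwP : w ∉ P := (Finset.mem_sdiff.mp hw).2
      have hC : C1 Cs ℓ P p S {w} w := by
        constructor
        · exact Finset.singleton_subset_iff.mpr hwCs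
        · intro x hx
          rw [Finset.mem_singleton.mp hx]; exact hwP
        · exact Finset.mem_singleton_self w
        · intro x hx hxw; exact absurd (Finset.mem_singleton.mp hx) hxw
        · intro x hx hxw; exact absurd (Finset.mem_singleton.mp hx) hxw
        · intro x hx hxw; exact absurd (Finset.mem_singleton.mp hx) hxw
        · intro x hx hxw; exact absurd (Finset.mem_singleton.mp hx) hxw
        · intro x hx
          exact ⟨0, Finset.mem_singleton.mp hx, by omega⟩
      obtain ⟨P', p', S', R', hG', hPP', hcard⟩ :=
        chain_rec hCs ℓ P p S R {w} w hG hC (by simp; omega) (by simp)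
      have hP'C : P'.card ≤ Cs.card := Finset.card_le_card hG'.hPC
      exact ih P' p' S' R' hG' (by omega)

/-- Phase 1: a complete global structure on `Cs`. -/
lemma phase1 (hℓ : 1 ≤ ℓ) (hCs : ℓ ≤ Cs.card) :
    ∃ (p : X → X) (S : X → Finset X) (R : Finset X), G1 Cs ℓ Cs p S R := by
  have hG0 : G1 Cs ℓ ∅ (fun x => x) (fun _ => ∅) ∅ := by
    constructor <;> simp
  exact phase1_rec hℓ hCs (Cs.card) ∅ (fun x => x) (fun _ => ∅) ∅ hG0 (by omega)


section Phase2

variable {p : X → X} {S : X → Finset X}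

/-- subtree of `v` inside `T` -/
noncomputable def lam (p : X → X) (T : Finset X) (v : X) : Finset X :=
  T.filter (fun x => Rch p x v)

lemma mem_lam {T : Finset X} {v x : X} : x ∈ lam p T v ↔ x ∈ T ∧ Rch p x v :=
  Finset.mem_filter

lemma lam_subset {T : Finset X} {v : X} : lam p T v ⊆ T := Finset.filter_subset _ _

lemma lam_mono {T : Finset X} {v u : X} (h : Rch p v u) : lam p T v ⊆ lam p T u := by
  intro x hx
  obtain ⟨h1, h2⟩ := mem_lam.mp hx
  exact mem_lam.mpr ⟨h1, h2.trans h⟩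

lemma self_mem_lam {T : Finset X} {v : X} (h : v ∈ T) : v ∈ lam p T v :=
  mem_lam.mpr ⟨h, Rch.refl p v⟩

/-- invariant for phase 2 on current tree `T` with root `rt` -/
structure J (Cs : Finset X) (ℓ : ℕ) (p : X → X) (S : X → Finset X)
    (T : Finset X) (rt : X) : Prop where
  hTC : T ⊆ Cs
  hrt : rt ∈ T
  hcard : ℓ ≤ T.card
  hprt : p rt = rt
  hreach : ∀ v ∈ T, Rch p v rt
  hS : ∀ v ∈ T, SProps ℓ p S T v
  hpar : ∀ v ∈ T, v ≠ rt → p v ∈ T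
  hguar : ∀ v ∈ T, v ≠ rt → ∀ u ∈ Cs, u ∉ S v → dist v (p v) ≤ dist v u

variable {Cs : Finset X} {ℓ : ℕ} {T : Finset X} {rt : X}

lemma J.orbit_mem (hJ : J Cs ℓ p S T rt) {v : X} (hv : v ∈ T) :
    ∀ n, p^[n] v ∈ T := by
  intro n
  induction n with
  | zero => exact hv
  | succ k ih =>
    rw [Function.iterate_succ_apply']
    by_cases h : p^[k] v = rt
    · rw [h, hJ.hprt]; exact hJ.hrt
    · exact hJ.hpar _ ih h

lemma iterate_fixed_point {f : X → X} {a : X} (h : f a = a) : ∀ n, f^[n] a = a := by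
  intro n
  induction n with
  | zero => rfl
  | succ k ih => rw [Function.iterate_succ_apply', ih, h]

lemma J.antisym (hJ : J Cs ℓ p S T rt) {v u : X} (hv : v ∈ T)
    (h1 : Rch p v u) (h2 : Rch p u v) : u = v := by
  obtain ⟨n, hn⟩ := h1
  obtain ⟨m, hm⟩ := h2
  rcases Nat.eq_zero_or_pos (m + n) with h0 | h0
  · have : n = 0 := by omega
    rw [this] at hn; exact hn.symm
  · -- v is periodic with period m + n > 0, and reaches rt, so v = rt
    have hper : p^[m + n] v = v := by
      rw [Function.iterate_add_apply, hn, hm]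
    have hmul : ∀ t, p^[(m + n) * t] v = v := by
      intro t
      induction t with
      | zero => rfl
      | succ s ih =>
        rw [Nat.mul_succ, Function.iterate_add_apply, hper, ih]
    obtain ⟨k, hk⟩ := hJ.hreach v hv
    have hbig : (m + n) * k ≥ k := Nat.le_mul_of_pos_left k h0
    have : p^[(m+n)*k] v = rt := by
      rw [show (m+n)*k = ((m+n)*k - k) + k by omega, Function.iterate_add_apply, hk,
        iterate_fixed_point hJ.hprt]
    have hvrt : v = rt := by rw [← hmul k, this]
    have hurt : u = rt := by
      rw [← hn, hvrt, iterate_fixed_point hJ.hprt]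
    rw [hvrt, hurt]

/-- minimal-time hit of `v` from a point of `S v`, staying inside `S v`. -/
lemma J.S_path (hJ : J Cs ℓ p S T rt) {v y : X} (hv : v ∈ T) (hy : y ∈ S v) :
    ∃ n, p^[n] y = v ∧ (∀ m, m < n → p^[m] y ∈ S v ∧ p^[m] y ≠ v) ∧
      (∀ m, p^[m] y = v → n ≤ m) := by
  obtain ⟨n0, hn0, hm0⟩ := (hJ.hS v hv).2.2.2.1 y hy
  have hex : ∃ n, p^[n] y = v := ⟨n0, hn0⟩
  classical
  refine ⟨Nat.find hex, Nat.find_spec hex, ?_, fun m hm => Nat.find_le hm⟩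
  intro m hm
  have hle : Nat.find hex ≤ n0 := Nat.find_le hn0
  exact ⟨hm0 m (by omega), Nat.find_min hex hm⟩

/-- orbit of a point of `S v` stays in `S v` until it hits `v`. -/
lemma J.S_stay (hJ : J Cs ℓ p S T rt) {v y : X} (hv : v ∈ T) (hy : y ∈ S v) :
    ∀ k, p^[k] y ∈ S v ∨ ∃ j ≤ k, p^[j] y = v := by
  intro k
  induction k with
  | zero => exact Or.inl hy
  | succ s ih =>
    rcases ih with h | ⟨j, hj, hjv⟩
    · by_cases hz : p^[s] y = v
      · exact Or.inr ⟨s, by omega, hz⟩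
      · rw [Function.iterate_succ_apply']
        exact Or.inl ((hJ.hS v hv).2.2.2.2.1 _ h hz)
    · exact Or.inr ⟨j, by omega, hjv⟩

/-- key lemma: the guarantee-sets of remaining vertices avoid the subtree of a free
cut vertex. -/
lemma J.S_disj_lam (hJ : J Cs ℓ p S T rt) {c : X} (hc : c ∈ T)
    (hfree : ∀ a ∈ T, c ∈ S a → a = c) {v : X} (hv : v ∈ T)
    (hvl : v ∉ lam p T c) : ∀ x ∈ S v, x ∉ lam p T c := by
  intro x hx hxl
  obtain ⟨k, hk⟩ := (mem_lam.mp hxl).2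
  obtain ⟨n0, hn0, hm0, _⟩ := hJ.S_path hv hx
  by_cases hkn : k < n0
  · have hcS : c ∈ S v := by rw [← hk]; exact (hm0 k hkn).1
    have := hfree v hv hcS
    rw [← this] at hvl
    exact hvl (self_mem_lam hv)
  · have : Rch p v c := ⟨k - n0, by rw [← hn0, ← Function.iterate_add_apply,
      show k - n0 + n0 = k by omega, hk]⟩
    exact hvl (mem_lam.mpr ⟨hv, this⟩)

/-- removing subtrees of free vertices preserves the invariant. -/
lemma J.remainder (hJ : J Cs ℓ p S T rt) (C : Finset X)
    (hC : ∀ c ∈ C, c ∈ T ∧ (∀ a ∈ T, c ∈ S a → a = c))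
    (hrtn : rt ∉ C.biUnion (lam p T ·))
    (hcard : ℓ ≤ (T \ C.biUnion (lam p T ·)).card) :
    J Cs ℓ p S (T \ C.biUnion (lam p T ·)) rt := by
  set Rm := C.biUnion (lam p T ·) with hRm
  have hmemT : ∀ x ∈ T \ Rm, x ∈ T := fun x hx => (Finset.mem_sdiff.mp hx).1
  constructor
  · exact (Finset.sdiff_subset).trans hJ.hTC
  · exact Finset.mem_sdiff.mpr ⟨hJ.hrt, hrtn⟩
  · exact hcard
  · exact hJ.hprt
  · exact fun v hv => hJ.hreach v (hmemT v hv)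
  · intro v hv
    obtain ⟨hvT, hvRm⟩ := Finset.mem_sdiff.mp hv
    obtain ⟨h1, h2, h3, h4, h5, h6⟩ := hJ.hS v hvT
    refine ⟨h1, ?_, h3, h4, h5, h6⟩
    intro x hx
    refine Finset.mem_sdiff.mpr ⟨h2 hx, ?_⟩
    intro hxRm
    obtain ⟨c, hcC, hcl⟩ := Finset.mem_biUnion.mp hxRm
    have hvl : v ∉ lam p T c := fun hvl => hvRm (Finset.mem_biUnion.mpr ⟨c, hcC, hvl⟩)
    exact hJ.S_disj_lam (hC c hcC).1 (hC c hcC).2 hvT hvl x hx hcl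
  · intro v hv hvrt
    obtain ⟨hvT, hvRm⟩ := Finset.mem_sdiff.mp hv
    refine Finset.mem_sdiff.mpr ⟨hJ.hpar v hvT hvrt, ?_⟩
    intro hpRm
    obtain ⟨c, hcC, hcl⟩ := Finset.mem_biUnion.mp hpRm
    have : v ∈ lam p T c :=
      mem_lam.mpr ⟨hvT, rch_of_parent_rch (mem_lam.mp hcl).2⟩
    exact hvRm (Finset.mem_biUnion.mpr ⟨c, hcC, this⟩)
  · exact fun v hv hvrt => hJ.hguar v (hmemT v hv) hvrt


lemma rch_update_free {q : X → X} {v e : X} (t : X) (h : Rch q v e) :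
    ∃ n, (Function.update q e t)^[n] v = e := by
  classical
  have hex : ∃ n, q^[n] v = e := h
  refine ⟨Nat.find hex, ?_⟩
  rw [iter_congr (Nat.find hex) (fun m hm =>
    Function.update_of_ne (Nat.find_min hex hm) _ _)]
  exact Nat.find_spec hex

/-- Piece of type B: the whole subtree of a free vertex `e`. -/
lemma pieceB (hJ : J Cs ℓ p S T rt) {e : X} (he : e ∈ T)
    (hfree : ∀ a ∈ T, e ∈ S a → a = e) :
    ∃ Q : CKM.RootedTree X, Q.V = lam p T e ∧ Q.root = e ∧
      CKM.IsNeighborhoodTree Cs Q := by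
  have hern : ∀ v ∈ lam p T e, v ≠ e → v ≠ rt := by
    intro v hv hve hvrt
    have h2 : Rch p e v := by rw [hvrt]; exact hJ.hreach e he
    exact hve (hJ.antisym (mem_lam.mp hv).1 (mem_lam.mp hv).2 h2).symm
  have heS : ∀ v ∈ lam p T e, v ≠ e → e ∉ S v := by
    intro v hv hve hmem
    exact hve (hfree v (mem_lam.mp hv).1 hmem)
  refine ⟨⟨lam p T e, e, self_mem_lam he, Function.update p e e, ?_, Function.update_self _ _ _, ?_⟩,
    rfl, rfl, ?_, ?_⟩
  · -- parent_mem
    intro v hv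
    by_cases hve : v = e
    · rw [hve, Function.update_self]; exact self_mem_lam he
    · rw [Function.update_of_ne hve]
      obtain ⟨hvT, hrch⟩ := mem_lam.mp hv
      exact mem_lam.mpr ⟨hJ.hpar v hvT (hern v hv hve),
        parent_rch_of_rch_ne hrch hve⟩
  · -- reaches_root
    intro v hv
    exact rch_update_free e (mem_lam.mp hv).2
  · -- vertices in Cs
    exact fun v hv => hJ.hTC (mem_lam.mp hv).1
  · -- neighborhood condition
    intro v hv hve u hu husub
    obtain ⟨hvT, hrch⟩ := mem_lam.mp hv
    have hvrt := hern v hv hve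
    have hpv : Function.update p e e v = p v := Function.update_of_ne hve _ _
    show dist v (Function.update p e e v) ≤ dist v u
    rw [hpv]
    refine hJ.hguar v hvT hvrt u hu ?_
    intro huS
    apply husub
    -- u is in the subtree of v
    have huT : u ∈ S v := huS
    obtain ⟨n, hn, hm, _⟩ := hJ.S_path hvT huT
    have huV : u ∈ lam p T e :=
      mem_lam.mpr ⟨(hJ.hS v hvT).2.1 huT, Rch.trans ⟨n, hn⟩ hrch⟩
    have havoid : ∀ m, m < n → p^[m] u ≠ e := fun m hmn hh =>
      (heS v hv hve) (by rw [← hh]; exact (hm m hmn).1)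
    refine ⟨huV, n, ?_⟩
    rw [iter_congr n (fun m hmn => Function.update_of_ne (havoid m hmn) _ _)]
    exact hn

/-- Piece of type A: a shared root `w` together with the subtrees of a family of
free children of `w`. -/
lemma pieceA (hJ : J Cs ℓ p S T rt) {w : X} (hw : w ∈ T) (C : Finset X)
    (hC : ∀ c ∈ C, c ∈ T ∧ p c = w ∧ c ≠ w ∧ (∀ a ∈ T, c ∈ S a → a = c)) :
    ∃ Q : CKM.RootedTree X, Q.V = insert w (C.biUnion (lam p T ·)) ∧ Q.root = w ∧
      CKM.IsNeighborhoodTree Cs Q := by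
  have hwnl : ∀ c ∈ C, w ∉ lam p T c := by
    intro c hc hwl
    obtain ⟨hcT, hpc, hcw, hcfree⟩ := hC c hc
    exact hcw (hJ.antisym hw (mem_lam.mp hwl).2 ⟨1, by simpa using hpc⟩ ▸ rfl)
  have hcrt : ∀ c ∈ C, c ≠ rt := by
    intro c hc hcrt
    obtain ⟨hcT, hpc, hcw, _⟩ := hC c hc
    apply hcw
    rw [← hpc, hcrt, hJ.hprt]
  have hlrn : ∀ c ∈ C, ∀ v ∈ lam p T c, v ≠ rt := by
    intro c hc v hv hvrt
    obtain ⟨hcT, hpc, hcw, _⟩ := hC c hc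
    have : c = rt := hJ.antisym (hvrt ▸ (mem_lam.mp hv).1) (hvrt ▸ (mem_lam.mp hv).2)
      (hJ.hreach c hcT)
    exact hcrt c hc this
  have hlnw : ∀ c ∈ C, ∀ v ∈ lam p T c, v ≠ w := by
    intro c hc v hv hvw
    exact hwnl c hc (hvw ▸ hv)
  refine ⟨⟨insert w (C.biUnion (lam p T ·)), w, Finset.mem_insert_self _ _,
    Function.update p w w, ?_, Function.update_self _ _ _, ?_⟩, rfl, rfl, ?_, ?_⟩
  · -- parent_mem
    intro v hv
    rcases Finset.mem_insert.mp hv with hvw | hvB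
    · rw [hvw, Function.update_self]; exact Finset.mem_insert_self _ _
    · obtain ⟨c, hcC, hcl⟩ := Finset.mem_biUnion.mp hvB
      obtain ⟨hcT, hpc, hcw, _⟩ := hC c hcC
      have hvw : v ≠ w := hlnw c hcC v hcl
      rw [Function.update_of_ne hvw]
      by_cases hvc : v = c
      · rw [hvc, hpc]; exact Finset.mem_insert_self _ _
      · refine Finset.mem_insert_of_mem (Finset.mem_biUnion.mpr ⟨c, hcC, ?_⟩)
        exact mem_lam.mpr ⟨hJ.hpar v (mem_lam.mp hcl).1 (hlrn c hcC v hcl),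
          parent_rch_of_rch_ne (mem_lam.mp hcl).2 hvc⟩
  · -- reaches_root
    intro v hv
    rcases Finset.mem_insert.mp hv with hvw | hvB
    · exact ⟨0, hvw⟩
    · obtain ⟨c, hcC, hcl⟩ := Finset.mem_biUnion.mp hvB
      obtain ⟨hcT, hpc, hcw, _⟩ := hC c hcC
      classical
      have hex : ∃ n, p^[n] v = c := (mem_lam.mp hcl).2
      have havoid : ∀ m, m < Nat.find hex → p^[m] v ≠ w := by
        intro m hm hh
        have hrest : Rch p (p^[m] v) c := ⟨Nat.find hex - m, by
          rw [← Function.iterate_add_apply, show Nat.find hex - m + m = Nat.find hex by omega]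
          exact Nat.find_spec hex⟩
        have : p^[m] v ∈ lam p T c :=
          mem_lam.mpr ⟨hJ.orbit_mem (mem_lam.mp hcl).1 m, hrest⟩
        exact hwnl c hcC (hh ▸ this)
      have hiter : (Function.update p w w)^[Nat.find hex] v = c := by
        rw [iter_congr (Nat.find hex) (fun m hm =>
          Function.update_of_ne (havoid m hm) _ _)]
        exact Nat.find_spec hex
      refine ⟨Nat.find hex + 1, ?_⟩
      rw [Function.iterate_succ_apply', hiter, Function.update_of_ne hcw, hpc]
  · exact fun v hv => by
      rcases Finset.mem_insert.mp hv with hvw | hvB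
      · rw [hvw]; exact hJ.hTC hw
      · obtain ⟨c, hcC, hcl⟩ := Finset.mem_biUnion.mp hvB
        exact hJ.hTC (mem_lam.mp hcl).1
  · -- neighborhood condition
    intro v hv hvroot u hu husub
    rcases Finset.mem_insert.mp hv with hvw | hvB
    · exact absurd hvw hvroot
    · obtain ⟨c, hcC, hcl⟩ := Finset.mem_biUnion.mp hvB
      obtain ⟨hcT, hpc, hcw, hcfree⟩ := hC c hcC
      obtain ⟨hvT, hrchc⟩ := mem_lam.mp hcl
      have hvrt := hlrn c hcC v hcl
      have hpv : Function.update p w w v = p v := Function.update_of_ne hvroot _ _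
      show dist v (Function.update p w w v) ≤ dist v u
      rw [hpv]
      refine hJ.hguar v hvT hvrt u hu ?_
      intro huS
      apply husub
      have hwS : w ∉ S v := by
        intro hwS
        obtain ⟨n, hn, _, _⟩ := hJ.S_path hvT hwS
        exact hwnl c hcC (mem_lam.mpr ⟨hw, Rch.trans ⟨n, hn⟩ hrchc⟩)
      obtain ⟨n, hn, hm, _⟩ := hJ.S_path hvT huS
      have huV : u ∈ lam p T c :=
        mem_lam.mpr ⟨(hJ.hS v hvT).2.1 huS, Rch.trans ⟨n, hn⟩ hrchc⟩
      have havoid : ∀ m, m < n → p^[m] u ≠ w := fun m hmn hh =>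
        hwS (by rw [← hh]; exact (hm m hmn).1)
      refine ⟨Finset.mem_insert_of_mem (Finset.mem_biUnion.mpr ⟨c, hcC, huV⟩), n, ?_⟩
      rw [iter_congr n (fun m hmn => Function.update_of_ne (havoid m hmn) _ _)]
      exact hn


/-- attach points of the segment of `e` -/
noncomputable def Aset (p : X → X) (S : X → Finset X) (T : Finset X) (e : X) : Finset X :=
  T.filter (fun c => p c ∈ S e ∧ c ∉ S e)

variable {e : X}

lemma Sreach (hJ : J Cs ℓ p S T rt) (he : e ∈ T) {y : X} (hy : y ∈ S e) : Rch p y e := by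
  obtain ⟨n, hn, _⟩ := (hJ.hS e he).2.2.2.1 y hy
  exact ⟨n, hn⟩

lemma A_rch (hJ : J Cs ℓ p S T rt) (he : e ∈ T) {c : X} (hc : c ∈ Aset p S T e) :
    Rch p c e := by
  obtain ⟨hcT, h1, h2⟩ := Finset.mem_filter.mp hc
  exact rch_of_parent_rch (Sreach hJ he h1)

lemma A_ne (hJ : J Cs ℓ p S T rt) (he : e ∈ T) {c : X} (hc : c ∈ Aset p S T e) :
    c ≠ e := by
  intro hce
  obtain ⟨hcT, h1, h2⟩ := Finset.mem_filter.mp hc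
  exact h2 (hce ▸ (hJ.hS e he).1)

lemma A_free (hJ : J Cs ℓ p S T rt) (he : e ∈ T)
    (hfree : ∀ a ∈ T, e ∈ S a → a = e) {c : X} (hc : c ∈ Aset p S T e) :
    ∀ a ∈ T, c ∈ S a → a = c := by
  intro a ha hcSa
  by_contra hac
  obtain ⟨hcT, h1, h2⟩ := Finset.mem_filter.mp hc
  have hz : p c ∈ S a := (hJ.hS a ha).2.2.2.2.1 c hcSa (fun h => hac h.symm)
  obtain ⟨na, hna, hma, hminA⟩ := hJ.S_path ha hz
  obtain ⟨ne', hne, hme, hminE⟩ := hJ.S_path he h1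
  rcases lt_trichotomy na ne' with hlt | heq | hgt
  · -- a ∈ S e, so S a ⊆ S e, so c ∈ S e: contradiction
    have haSe : a ∈ S e := by rw [← hna]; exact (hme na hlt).1
    exact h2 (((hJ.hS e he).2.2.2.2.2 a haSe) hcSa)
  · have : a = e := by rw [← hna, heq, hne]
    exact h2 (this ▸ hcSa)
  · have heSa : e ∈ S a := by rw [← hne]; exact (hma ne' hgt).1
    have : a = e := hfree a ha heSa
    exact h2 (this ▸ hcSa)

lemma lam_pair_aux (hJ : J Cs ℓ p S T rt) (he : e ∈ T) {c c' x : X}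
    (hc : c ∈ Aset p S T e) (hc' : c' ∈ Aset p S T e)
    {n m : ℕ} (hn : p^[n] x = c) (hm : p^[m] x = c') (hnm : n ≤ m) : c = c' := by
  by_contra hne
  obtain ⟨hcT, h1, h2⟩ := Finset.mem_filter.mp hc
  obtain ⟨hcT', h1', h2'⟩ := Finset.mem_filter.mp hc'
  have hstep : c' = p^[m - n] c := by
    rw [← hn, ← Function.iterate_add_apply, show m - n + n = m by omega, hm]
  have hmn : m - n ≠ 0 := by
    intro h0
    rw [h0] at hstep
    exact hne hstep.symm
  have hstep' : c' = p^[m - n - 1] (p c) := by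
    rw [hstep, show m - n = (m - n - 1) + 1 by omega]
    rw [Function.iterate_add_apply]
    rfl
  rcases hJ.S_stay he h1 (m - n - 1) with hin | ⟨j, hj, hjv⟩
  · exact h2' (hstep' ▸ hin)
  · have : c' = p^[m - n - 1 - j] e := by
      rw [hstep', ← hjv, ← Function.iterate_add_apply,
        show m - n - 1 - j + j = m - n - 1 by omega]
    have hrch : Rch p e c' := ⟨m - n - 1 - j, this.symm⟩
    exact (A_ne hJ he hc') (hJ.antisym he hrch (A_rch hJ he hc'))

/-- decomposition of the subtree of a free vertex `e` into its segment and the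
subtrees of attach points. -/
lemma lam_decomp (hJ : J Cs ℓ p S T rt) (he : e ∈ T)
    (hfree : ∀ a ∈ T, e ∈ S a → a = e) :
    lam p T e = S e ∪ (Aset p S T e).biUnion (lam p T ·) ∧
    Disjoint (S e) ((Aset p S T e).biUnion (lam p T ·)) ∧
    (∀ c ∈ Aset p S T e, ∀ c' ∈ Aset p S T e, c ≠ c' →
      Disjoint (lam p T c) (lam p T c')) := by
  classical
  have hSsub : S e ⊆ lam p T e := fun y hy =>
    mem_lam.mpr ⟨(hJ.hS e he).2.1 hy, Sreach hJ he hy⟩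
  refine ⟨?_, ?_, ?_⟩
  · apply Finset.Subset.antisymm
    · intro x hx
      by_cases hxS : x ∈ S e
      · exact Finset.mem_union_left _ hxS
      · obtain ⟨hxT, n, hn⟩ := mem_lam.mp hx
        have hex : ∃ m, p^[m] x ∈ S e := ⟨n, by rw [hn]; exact (hJ.hS e he).1⟩
        set k := Nat.find hex with hk
        have hkspec : p^[k] x ∈ S e := Nat.find_spec hex
        have hk1 : 1 ≤ k := by
          rcases Nat.eq_zero_or_pos k with h0 | h0
          · exfalso
            apply hxS
            have := hkspec
            rw [h0] at this
            simpa using this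
          · exact h0
        set c := p^[k-1] x with hc
        have hpc : p c = p^[k] x := by
          rw [hc]
          conv_rhs => rw [show k = (k-1)+1 by omega]
          rw [Function.iterate_succ_apply']
        have hcA : c ∈ Aset p S T e := Finset.mem_filter.mpr
          ⟨hJ.orbit_mem hxT _, by rw [hpc]; exact hkspec,
            Nat.find_min hex (show k - 1 < k by omega)⟩
        exact Finset.mem_union_right _ (Finset.mem_biUnion.mpr
          ⟨c, hcA, mem_lam.mpr ⟨hxT, ⟨k-1, rfl⟩⟩⟩)
    · apply Finset.union_subset hSsub
      intro x hx
      obtain ⟨c, hcA, hcl⟩ := Finset.mem_biUnion.mp hx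
      exact lam_mono (A_rch hJ he hcA) hcl
  · rw [Finset.disjoint_left]
    intro x hxS hxB
    obtain ⟨c, hcA, hcl⟩ := Finset.mem_biUnion.mp hxB
    obtain ⟨k, hk⟩ := (mem_lam.mp hcl).2
    rcases hJ.S_stay he hxS k with hin | ⟨j, hj, hjv⟩
    · exact (Finset.mem_filter.mp hcA).2.2 (hk ▸ hin)
    · have : c = p^[k - j] e := by
        rw [← hk, ← hjv, ← Function.iterate_add_apply, show k - j + j = k by omega]
      exact (A_ne hJ he hcA)
        (hJ.antisym he ⟨k - j, this.symm⟩ (A_rch hJ he hcA))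
  · intro c hc c' hc' hne
    rw [Finset.disjoint_left]
    intro x hxc hxc'
    obtain ⟨n, hn⟩ := (mem_lam.mp hxc).2
    obtain ⟨m, hm⟩ := (mem_lam.mp hxc').2
    rcases le_total n m with h | h
    · exact hne (lam_pair_aux hJ he hc hc' hn hm h)
    · exact hne (lam_pair_aux hJ he hc' hc hm hn h).symm


/-- the relation of having disjoint non-root vertex sets -/
def NRdisj (Q Q' : CKM.RootedTree X) : Prop :=
  Disjoint (Q.V.erase Q.root) (Q'.V.erase Q'.root)

lemma NRdisj_symm : Symmetric (NRdisj (X := X)) :=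
  fun _ _ h => Disjoint.symm h

/-- Phase 2: splitting of a tree satisfying `J` into neighborhood trees of the right
sizes. -/
lemma phase2_rec (hℓ : 2 ≤ ℓ) :
    ∀ (N : ℕ) (T : Finset X) (rt : X), J Cs ℓ p S T rt → T.card ≤ N →
    ∃ L : List (CKM.RootedTree X),
      (∀ Q ∈ L, CKM.IsNeighborhoodTree Cs Q ∧ ℓ ≤ Q.V.card ∧ Q.V.card ≤ ℓ^2 ∧
        Q.V ⊆ T) ∧
      (∀ v ∈ T, ∃ Q ∈ L, v ∈ Q.V) ∧
      List.Pairwise NRdisj L := by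
  have hsq : 2 * ℓ ≤ ℓ^2 := by
    rw [pow_two]
    exact Nat.mul_le_mul_right ℓ hℓ
  obtain ⟨m, hm⟩ : ∃ m, ℓ = m + 2 := ⟨ℓ - 2, by omega⟩
  have hsq3 : ℓ^2 = m*m + 4*m + 4 := by subst hm; ring
  have hsq4 : ℓ*ℓ = ℓ^2 := (pow_two ℓ).symm
  intro N
  induction N with
  | zero =>
    intro T rt hJ hN
    exact absurd hJ.hcard (by omega)
  | succ N ih =>
    intro T rt hJ hN
    by_cases hsmall : T.card ≤ ℓ^2
    · -- base case: the whole tree is a single piece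
      have hparmem : ∀ v ∈ T, p v ∈ T := by
        intro v hv
        by_cases hvrt : v = rt
        · rw [hvrt, hJ.hprt]; exact hJ.hrt
        · exact hJ.hpar v hv hvrt
      refine ⟨[⟨T, rt, hJ.hrt, p, hparmem, hJ.hprt, fun v hv => hJ.hreach v hv⟩],
        ?_, ?_, ?_⟩
      · intro Q hQ
        rw [List.mem_singleton] at hQ
        subst hQ
        refine ⟨⟨fun v hv => hJ.hTC hv, ?_⟩, hJ.hcard, hsmall, fun _ h => h⟩
        intro v hv hvrt u hu husub
        refine hJ.hguar v hv hvrt u hu ?_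
        intro huS
        apply husub
        obtain ⟨n, hn, _⟩ := (hJ.hS v hv).2.2.2.1 u huS
        exact ⟨(hJ.hS v hv).2.1 huS, n, hn⟩
      · intro v hv
        exact ⟨_, List.mem_singleton_self _, hv⟩
      · exact List.pairwise_singleton _ _
    · push_neg at hsmall
      -- choose a minimal free heavy vertex e
      classical
      set H := T.filter (fun v => (∀ a ∈ T, v ∈ S a → a = v) ∧ ℓ ≤ (lam p T v).card)
        with hH
      have hlamrt : lam p T rt = T :=
        Finset.Subset.antisymm lam_subset
          (fun x hx => mem_lam.mpr ⟨hx, hJ.hreach x hx⟩)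
      have hrtH : rt ∈ H := by
        refine Finset.mem_filter.mpr ⟨hJ.hrt, ?_, ?_⟩
        · intro a ha hrS
          exact hJ.antisym hJ.hrt (Sreach hJ ha hrS) (hJ.hreach a ha)
        · rw [hlamrt]; exact hJ.hcard
      obtain ⟨e, heH, hemin⟩ := Finset.exists_min_image H
        (fun v => (lam p T v).card) ⟨rt, hrtH⟩
      obtain ⟨he, hefree, heheavy⟩ := Finset.mem_filter.mp heH
      -- no free heavy proper descendants of e
      have hnonheavy : ∀ c ∈ T, Rch p c e → c ≠ e → (∀ a ∈ T, c ∈ S a → a = c) →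
          (lam p T c).card < ℓ := by
        intro c hcT hrch hce hcfree
        by_contra hcon
        push_neg at hcon
        have hcH : c ∈ H := Finset.mem_filter.mpr ⟨hcT, hcfree, hcon⟩
        have h1 := hemin c hcH
        have hssub : lam p T c ⊂ lam p T e := by
          refine Finset.ssubset_iff_of_subset (lam_mono hrch) |>.mpr ⟨e, self_mem_lam he, ?_⟩
          intro hel
          exact hce (hJ.antisym he (mem_lam.mp hel).2 hrch)
        have := Finset.card_lt_card hssub
        omega
      have hAbound : ∀ c ∈ Aset p S T e, (lam p T c).card ≤ ℓ - 1 := by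
        intro c hcA
        have := hnonheavy c (Finset.mem_filter.mp hcA).1 (A_rch hJ he hcA)
          (A_ne hJ he hcA) (A_free hJ he hefree hcA)
        omega
      obtain ⟨hdecomp, hdisj1, hdisj2⟩ := lam_decomp hJ he hefree
      have hcardeq : (lam p T e).card =
          (S e).card + ∑ c ∈ Aset p S T e, (lam p T c).card := by
        rw [hdecomp, Finset.card_union_of_disjoint hdisj1, Finset.card_biUnion hdisj2]
      have hfib : ∑ w ∈ S e, ∑ c ∈ (Aset p S T e).filter (fun c => p c = w),
          (lam p T c).card = ∑ c ∈ Aset p S T e, (lam p T c).card :=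
        Finset.sum_fiberwise_of_maps_to (fun c hc => (Finset.mem_filter.mp hc).2.1) _
      by_cases hq : ∃ w ∈ S e, ℓ - 1 ≤
          ∑ c ∈ (Aset p S T e).filter (fun c => p c = w), (lam p T c).card
      · -- CASE A: a heavy attach point w; take a shared-root piece at w
        obtain ⟨w, hwSe, hwsum⟩ := hq
        have hwT : w ∈ T := (hJ.hS e he).2.1 hwSe
        obtain ⟨C, hCsub, ht1, ht2⟩ := exists_subsum (ℓ-1) (ℓ-1) (by omega)
          ((Aset p S T e).filter (fun c => p c = w)) (fun c => (lam p T c).card)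
          (fun c hc => hAbound c (Finset.mem_of_mem_filter c hc)) hwsum
        have hCA : ∀ c ∈ C, c ∈ Aset p S T e :=
          fun c hc => Finset.mem_of_mem_filter c (hCsub hc)
        have hCw : ∀ c ∈ C, p c = w :=
          fun c hc => (Finset.mem_filter.mp (hCsub hc)).2
        have hCprops : ∀ c ∈ C, c ∈ T ∧ p c = w ∧ c ≠ w ∧
            (∀ a ∈ T, c ∈ S a → a = c) := by
          intro c hc
          refine ⟨(Finset.mem_filter.mp (hCA c hc)).1, hCw c hc, ?_,
            A_free hJ he hefree (hCA c hc)⟩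
          intro hcw
          -- c = w would give p c = c, hence c ∈ S e, contradiction
          have h1 := (Finset.mem_filter.mp (hCA c hc)).2.1
          have h2 := (Finset.mem_filter.mp (hCA c hc)).2.2
          rw [hCw c hc] at h1
          exact h2 (hcw ▸ h1)
        obtain ⟨Q, hQV, hQroot, hQnbhd⟩ := pieceA hJ hwT C hCprops
        set B := C.biUnion (lam p T ·) with hB
        have hbicard : B.card = ∑ c ∈ C, (lam p T c).card :=
          Finset.card_biUnion (fun c hc c' hc' hne =>
            hdisj2 c (hCA c hc) c' (hCA c' hc') hne)
        have hwB : w ∉ B := by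
          intro hwB'
          have : w ∈ (Aset p S T e).biUnion (lam p T ·) := by
            obtain ⟨c, hc, hcl⟩ := Finset.mem_biUnion.mp hwB'
            exact Finset.mem_biUnion.mpr ⟨c, hCA c hc, hcl⟩
          exact (Finset.disjoint_left.mp hdisj1) hwSe this
        have hQcard : Q.V.card = 1 + ∑ c ∈ C, (lam p T c).card := by
          rw [hQV, Finset.card_insert_of_notMem hwB, hbicard]
          omega
        have hBT : B ⊆ T := by
          intro x hx
          obtain ⟨c, hc, hcl⟩ := Finset.mem_biUnion.mp hx
          exact (mem_lam.mp hcl).1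
        -- the remainder
        have hrtB : rt ∉ B := by
          intro hrtB'
          obtain ⟨c, hc, hcl⟩ := Finset.mem_biUnion.mp hrtB'
          have hceq : c = rt := hJ.antisym hJ.hrt (mem_lam.mp hcl).2
            (hJ.hreach c (Finset.mem_filter.mp (hCA c hc)).1)
          have h1 := (Finset.mem_filter.mp (hCA c hc)).2.1
          have h2 := (Finset.mem_filter.mp (hCA c hc)).2.2
          rw [hceq, hJ.hprt] at h1
          exact h2 (hceq ▸ h1)
        have hT'card : (T \ B).card = T.card - ∑ c ∈ C, (lam p T c).card := by
          rw [Finset.card_sdiff_of_subset hBT, hbicard]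
        have hT'ge : ℓ ≤ (T \ B).card := by
          rw [hT'card]; omega
        have hJ' : J Cs ℓ p S (T \ B) rt := hJ.remainder C
          (fun c hc => ⟨(Finset.mem_filter.mp (hCA c hc)).1,
            A_free hJ he hefree (hCA c hc)⟩)
          hrtB hT'ge
        obtain ⟨L', hL1, hL2, hL3⟩ := ih (T \ B) rt hJ' (by rw [hT'card]; omega)
        refine ⟨Q :: L', ?_, ?_, ?_⟩
        · intro Q' hQ'
          rcases List.mem_cons.mp hQ' with h | h
          · subst h
            refine ⟨hQnbhd, by omega, by omega, ?_⟩
            rw [hQV]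
            exact Finset.insert_subset hwT hBT
          · obtain ⟨ha, hb, hc, hd⟩ := hL1 Q' h
            exact ⟨ha, hb, hc, hd.trans Finset.sdiff_subset⟩
        · intro v hv
          by_cases hvB : v ∈ B
          · refine ⟨Q, List.mem_cons_self, ?_⟩
            rw [hQV]
            exact Finset.mem_insert_of_mem hvB
          · obtain ⟨Q', hQ', hvQ'⟩ := hL2 v (Finset.mem_sdiff.mpr ⟨hv, hvB⟩)
            exact ⟨Q', List.mem_cons_of_mem _ hQ', hvQ'⟩
        · refine List.pairwise_cons.mpr ⟨?_, hL3⟩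
          intro Q' hQ'
          unfold NRdisj
          rw [Finset.disjoint_left]
          intro x hx hx'
          have hxB : x ∈ B := by
            have hx1 := Finset.mem_erase.mp hx
            rw [hQroot] at hx1
            rw [hQV] at hx1
            rcases Finset.mem_insert.mp hx1.2 with h | h
            · exact absurd h hx1.1
            · exact h
          have hx'T : x ∈ T \ B := (hL1 Q' hQ').2.2.2
            (Finset.mem_of_mem_erase hx')
          exact (Finset.mem_sdiff.mp hx'T).2 hxB
      · -- CASE B: all attach points are light; take the whole subtree of e
        push_neg at hq
        have hsum2 : ∑ c ∈ Aset p S T e, (lam p T c).card ≤ ℓ * (ℓ - 2) := by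
          calc ∑ c ∈ Aset p S T e, (lam p T c).card
              = ∑ w ∈ S e, ∑ c ∈ (Aset p S T e).filter (fun c => p c = w),
                (lam p T c).card := hfib.symm
            _ ≤ ∑ w ∈ S e, (ℓ - 2) := Finset.sum_le_sum (fun w hw => by
                have := hq w hw; omega)
            _ = (S e).card * (ℓ - 2) := by rw [Finset.sum_const, smul_eq_mul]
            _ ≤ ℓ * (ℓ - 2) := Nat.mul_le_mul_right _ ((hJ.hS e he).2.2.1)
        have hmulkey : ℓ * (ℓ - 2) + ℓ * 2 = ℓ * ℓ := by
          rw [← Nat.mul_add]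
          congr 1
          omega
        have hlame : (lam p T e).card ≤ ℓ * ℓ - ℓ := by
          have hSecard := (hJ.hS e he).2.2.1
          omega
        have hrtlam : rt ∉ lam p T e := by
          intro hrt'
          have heq : e = rt := hJ.antisym hJ.hrt (mem_lam.mp hrt').2 (hJ.hreach e he)
          rw [heq, hlamrt] at hlame
          omega
        obtain ⟨Q, hQV, hQroot, hQnbhd⟩ := pieceB hJ he hefree
        have hbie : (({e} : Finset X).biUnion (lam p T ·)) = lam p T e :=
          Finset.singleton_biUnion
        have hT'card : (T \ lam p T e).card = T.card - (lam p T e).card :=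
          Finset.card_sdiff_of_subset lam_subset
        have hT'ge : ℓ ≤ (T \ lam p T e).card := by
          rw [hT'card]
          omega
        have hJ' : J Cs ℓ p S (T \ lam p T e) rt := by
          have := hJ.remainder {e}
            (fun c hc => by
              rw [Finset.mem_singleton] at hc
              subst hc
              exact ⟨he, hefree⟩)
            (by rw [hbie]; exact hrtlam)
            (by rw [hbie]; exact hT'ge)
          rwa [hbie] at this
        obtain ⟨L', hL1, hL2, hL3⟩ := ih (T \ lam p T e) rt hJ' (by
          rw [hT'card]
          omega)
        refine ⟨Q :: L', ?_, ?_, ?_⟩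
        · intro Q' hQ'
          rcases List.mem_cons.mp hQ' with h | h
          · subst h
            refine ⟨hQnbhd, ?_, ?_, ?_⟩
            · rw [hQV]; exact heheavy
            · rw [hQV]; omega
            · rw [hQV]; exact lam_subset
          · obtain ⟨ha, hb, hc, hd⟩ := hL1 Q' h
            exact ⟨ha, hb, hc, hd.trans Finset.sdiff_subset⟩
        · intro v hv
          by_cases hvB : v ∈ lam p T e
          · refine ⟨Q, List.mem_cons_self, ?_⟩
            rw [hQV]
            exact hvB
          · obtain ⟨Q', hQ', hvQ'⟩ := hL2 v (Finset.mem_sdiff.mpr ⟨hv, hvB⟩)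
            exact ⟨Q', List.mem_cons_of_mem _ hQ', hvQ'⟩
        · refine List.pairwise_cons.mpr ⟨?_, hL3⟩
          intro Q' hQ'
          unfold NRdisj
          rw [Finset.disjoint_left]
          intro x hx hx'
          have hxB : x ∈ lam p T e := by
            rw [hQV] at hx
            exact Finset.mem_of_mem_erase hx
          have hx'T : x ∈ T \ lam p T e := (hL1 Q' hQ').2.2.2
            (Finset.mem_of_mem_erase hx')
          exact (Finset.mem_sdiff.mp hx'T).2 hxB


end Phase2

section Glue

variable {Cs : Finset X} {ℓ : ℕ} {p : X → X} {S : X → Finset X} {R : Finset X}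

noncomputable def Comp (p : X → X) (Cs : Finset X) (r : X) : Finset X :=
  Cs.filter (fun x => Rch p x r)

lemma comp_J (hG : G1 Cs ℓ Cs p S R) {r : X} (hr : r ∈ R) :
    J Cs ℓ p S (Comp p Cs r) r := by
  have hrC : r ∈ Cs := hG.hRP hr
  have hprr : p r = r := hG.hroot r hr
  have hnotR : ∀ v ∈ Comp p Cs r, v ≠ r → v ∉ R := by
    intro v hv hvr hvR
    obtain ⟨n, hn⟩ := (Finset.mem_filter.mp hv).2
    rw [iterate_fixed_point (hG.hroot v hvR) n] at hn
    exact hvr hn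
  have hSsubC : ∀ v ∈ Comp p Cs r, S v ⊆ Comp p Cs r := by
    intro v hv y hy
    obtain ⟨hvC, hvr⟩ := Finset.mem_filter.mp hv
    obtain ⟨n, hn, _⟩ := (hG.hS v hvC).2.2.2.1 y hy
    exact Finset.mem_filter.mpr ⟨(hG.hS v hvC).2.1 hy, Rch.trans ⟨n, hn⟩ hvr⟩
  constructor
  · exact Finset.filter_subset _ _
  · exact Finset.mem_filter.mpr ⟨hrC, Rch.refl p r⟩
  · -- ℓ ≤ card: S r is contained in the component and has card ℓ
    have hsub : S r ⊆ Comp p Cs r := hSsubC r (Finset.mem_filter.mpr ⟨hrC, Rch.refl p r⟩)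
    have := Finset.card_le_card hsub
    rw [hG.hScardR r hr] at this
    exact this
  · exact hprr
  · exact fun v hv => (Finset.mem_filter.mp hv).2
  · intro v hv
    obtain ⟨h1, h2, h3, h4, h5, h6⟩ := hG.hS v (Finset.mem_filter.mp hv).1
    exact ⟨h1, hSsubC v hv, h3, h4, h5, h6⟩
  · intro v hv hvr
    obtain ⟨hvC, hrch⟩ := Finset.mem_filter.mp hv
    exact Finset.mem_filter.mpr ⟨hG.hpar v hvC (hnotR v hv hvr),
      parent_rch_of_rch_ne hrch hvr⟩
  · intro v hv hvr
    exact hG.hguar v (Finset.mem_filter.mp hv).1 (hnotR v hv hvr)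

lemma comp_disjoint (hG : G1 Cs ℓ Cs p S R) {r r' : X} (hr : r ∈ R) (hr' : r' ∈ R)
    (hne : r ≠ r') : Disjoint (Comp p Cs r) (Comp p Cs r') := by
  rw [Finset.disjoint_left]
  intro v hv hv'
  obtain ⟨n, hn⟩ := (Finset.mem_filter.mp hv).2
  obtain ⟨m, hm⟩ := (Finset.mem_filter.mp hv').2
  apply hne
  rcases le_total n m with h | h
  · rw [show m = (m - n) + n by omega, Function.iterate_add_apply, hn,
      iterate_fixed_point (hG.hroot r hr)] at hm
    exact hm
  · rw [show n = (n - m) + m by omega, Function.iterate_add_apply, hm,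
      iterate_fixed_point (hG.hroot r' hr')] at hn
    exact hn.symm

lemma assemble (hℓ : 2 ≤ ℓ) (hG : G1 Cs ℓ Cs p S R) :
    ∀ R' : Finset X, R' ⊆ R →
    ∃ L : List (CKM.RootedTree X),
      (∀ Q ∈ L, CKM.IsNeighborhoodTree Cs Q ∧ ℓ ≤ Q.V.card ∧ Q.V.card ≤ ℓ^2 ∧
        ∃ r ∈ R', Q.V ⊆ Comp p Cs r) ∧
      (∀ r ∈ R', ∀ v ∈ Comp p Cs r, ∃ Q ∈ L, v ∈ Q.V) ∧
      List.Pairwise NRdisj L := by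
  intro R'
  induction R' using Finset.induction_on with
  | empty =>
    intro _
    exact ⟨[], by simp, by simp, List.Pairwise.nil⟩
  | @insert r R'' hrR'' ihR =>
    intro hsub
    have hrR : r ∈ R := hsub (Finset.mem_insert_self _ _)
    have hsub'' : R'' ⊆ R := fun x hx => hsub (Finset.mem_insert_of_mem hx)
    obtain ⟨L'', h1'', h2'', h3''⟩ := ihR hsub''
    obtain ⟨Lr, h1r, h2r, h3r⟩ := phase2_rec hℓ ((Comp p Cs r).card)
      (Comp p Cs r) r (comp_J hG hrR) (le_refl _)
    refine ⟨Lr ++ L'', ?_, ?_, ?_⟩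
    · intro Q hQ
      rcases List.mem_append.mp hQ with h | h
      · obtain ⟨ha, hb, hc, hd⟩ := h1r Q h
        exact ⟨ha, hb, hc, r, Finset.mem_insert_self _ _, hd⟩
      · obtain ⟨ha, hb, hc, r', hr', hd⟩ := h1'' Q h
        exact ⟨ha, hb, hc, r', Finset.mem_insert_of_mem hr', hd⟩
    · intro r' hr' v hv
      rcases Finset.mem_insert.mp hr' with h | h
      · subst h
        obtain ⟨Q, hQ, hvQ⟩ := h2r v hv
        exact ⟨Q, List.mem_append_left _ hQ, hvQ⟩
      · obtain ⟨Q, hQ, hvQ⟩ := h2'' r' h v hv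
        exact ⟨Q, List.mem_append_right _ hQ, hvQ⟩
    · rw [List.pairwise_append]
      refine ⟨h3r, h3'', ?_⟩
      intro Q hQ Q' hQ'
      obtain ⟨_, _, _, hd⟩ := h1r Q hQ
      obtain ⟨_, _, _, r', hr', hd'⟩ := h1'' Q' hQ'
      have hrne : r ≠ r' := fun h => hrR'' (h ▸ hr')
      unfold NRdisj
      rw [Finset.disjoint_left]
      intro x hx hx'
      have hx1 : x ∈ Comp p Cs r := hd (Finset.mem_of_mem_erase hx)
      have hx2 : x ∈ Comp p Cs r' := hd' (Finset.mem_of_mem_erase hx')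
      exact (Finset.disjoint_left.mp (comp_disjoint hG hrR (hsub'' hr') hrne)) hx1 hx2

end Glue
end NT

open CKM

/-- **Lemma 4.4.** For any finite set `Cs` of points with `|Cs| ≥ ℓ`, there is a finite
family `𝕋` of neighborhood trees such that (T1) every tree has between `ℓ` and `ℓ²`
vertices, (T2) the vertex sets of the trees cover `Cs`, and (T3) the non-root vertex
sets of distinct trees are disjoint. -/
theorem stmt13 (X : Type) [PseudoMetricSpace X] (Cs : Finset X)
    (ℓ : ℕ) (hℓ : 0 < ℓ) (hCs : ℓ ≤ Cs.card) :
    ∃ 𝕋 : Finset (CKM.RootedTree X),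
      (∀ T ∈ 𝕋, IsNeighborhoodTree Cs T ∧ ℓ ≤ T.V.card ∧ T.V.card ≤ ℓ ^ 2) ∧
      (∀ v ∈ Cs, ∃ T ∈ 𝕋, v ∈ T.V) ∧
      (∀ T ∈ 𝕋, ∀ T' ∈ 𝕋, T ≠ T' →
        ∀ v ∈ T.V, v ≠ T.root → v ∈ T'.V → v = T'.root) := by
  classical
  by_cases hone : ℓ = 1
  · -- trivial case: singletons
    subst hone
    refine ⟨Cs.image (fun v => ⟨{v}, v, Finset.mem_singleton_self v, id,
      fun w hw => hw, rfl, fun w hw => ⟨0, Finset.mem_singleton.mp hw⟩⟩), ?_, ?_, ?_⟩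
    · intro T hT
      obtain ⟨v, hv, rfl⟩ := Finset.mem_image.mp hT
      refine ⟨⟨?_, ?_⟩, by simp, by simp⟩
      · intro w hw
        rw [Finset.mem_singleton.mp hw]
        exact hv
      · intro w hw hwroot
        exact absurd (Finset.mem_singleton.mp hw) hwroot
    · intro v hv
      exact ⟨_, Finset.mem_image_of_mem _ hv, Finset.mem_singleton_self v⟩
    · intro T hT T' hT' hne v hvT hvroot hvT'
      obtain ⟨u, hu, rfl⟩ := Finset.mem_image.mp hT
      exact absurd (Finset.mem_singleton.mp hvT) hvroot
  · have hℓ2 : 2 ≤ ℓ := by omega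
    obtain ⟨p, S, R, hG⟩ := NT.phase1 (by omega) hCs
    obtain ⟨L, hL1, hL2, hL3⟩ := NT.assemble hℓ2 hG R (Finset.Subset.refl R)
    refine ⟨L.toFinset, ?_, ?_, ?_⟩
    · intro T hT
      obtain ⟨ha, hb, hc, _⟩ := hL1 T (List.mem_toFinset.mp hT)
      exact ⟨ha, hb, hc⟩
    · intro v hv
      obtain ⟨n, hn, _⟩ := hG.hreachR v hv
      have hvcomp : v ∈ NT.Comp p Cs (p^[n] v) :=
        Finset.mem_filter.mpr ⟨hv, ⟨n, rfl⟩⟩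
      obtain ⟨Q, hQ, hvQ⟩ := hL2 (p^[n] v) hn v hvcomp
      exact ⟨Q, List.mem_toFinset.mpr hQ, hvQ⟩
    · intro T hT T' hT' hne v hvT hvroot hvT'
      have hdisj : NT.NRdisj T T' := (haveI : Std.Symm (NT.NRdisj (X := X)) := ⟨fun a b h => NT.NRdisj_symm h⟩; List.Pairwise.forall hL3)
        (List.mem_toFinset.mp hT) (List.mem_toFinset.mp hT') hne
      by_contra hvroot'
      exact (Finset.disjoint_left.mp hdisj)
        (Finset.mem_erase.mpr ⟨hvroot, hvT⟩)
        (Finset.mem_erase.mpr ⟨hvroot', hvT'⟩)
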